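/- Let σ and σ' be disjoint planar lines in ℝ². Then σ' is contained in exactly one of L(σ) or R(σ); moreover if σ' ⊆ L(σ), then closure(R(σ)) is contained in exactly one of L(σ') or R(σ'), so that one of the four nesting relations holds: R(σ) ⊆ L(σ'), R(σ) ⊆ R(σ'), with symmetric statements when σ' ⊆ R(σ). In particular the sides of two disjoint planar lines are always nested or disjoint. -/

import Mathlib

open Set

noncomputable section
open Complex Metric Real

private lemma myIntConst {X : Type*} [TopologicalSpace X] {s : Set X} (hs : IsPreconnected s)
    {h : X → ℝ} (hc : ContinuousOn h s) (hint : ∀ x ∈ s, ∃ k : ℤ, h x = k)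
    {x y : X} (hx : x ∈ s) (hy : y ∈ s) : h x = h y := by
  have key : ∀ a ∈ s, ∀ b ∈ s, h a < h b → False := by
    intro a ha b hb hab
    obtain ⟨k, hk⟩ := hint a ha
    obtain ⟨l, hl⟩ := hint b hb
    have hkl : (k : ℝ) < l := by rw [← hk, ← hl]; exact hab
    have hkl' : k < l := by exact_mod_cast hkl
    have hkl2 : (k : ℝ) + 1 ≤ l := by exact_mod_cast hkl'
    have hmem : (k : ℝ) + 1/2 ∈ Icc (h a) (h b) := by
      constructor <;> rw [hk, hl] at * <;> linarith
    obtain ⟨z, hz, hzv⟩ := hs.intermediate_value ha hb hc hmem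
    obtain ⟨m, hm⟩ := hint z hz
    have : (m : ℝ) = k + 1/2 := by rw [← hm, hzv]
    have h1 : k < m := by exact_mod_cast (show (k:ℝ) < m by linarith)
    have h2 : (k:ℝ) + 1 ≤ m := by exact_mod_cast h1
    linarith
  rcases lt_trichotomy (h x) (h y) with h' | h' | h'
  · exact absurd (key x hx y hy h') (by simp)
  · exact h'
  · exact absurd (key y hy x hx h') (by simp)

private lemma myExpDiff {a b : ℝ} (h : Complex.exp (a * I) = Complex.exp (b * I)) :
    ∃ k : ℤ, a = b + k * (2 * π) := by
  obtain ⟨n, hn⟩ := Complex.exp_eq_exp_iff_exists_int.mp h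
  refine ⟨n, ?_⟩
  have h2 : (a : ℂ) * I = ((b + n * (2 * π) : ℝ) : ℂ) * I := by
    push_cast
    rw [hn]; ring
  have h3 : (a : ℂ) = ((b + n * (2 * π) : ℝ) : ℂ) := mul_right_cancel₀ I_ne_zero h2
  exact_mod_cast h3

private lemma myLiftAgree {s : Set (ℝ × ℝ)} (hs : IsPreconnected s) {g₁ g₂ : ℝ × ℝ → ℝ}
    (h₁ : ContinuousOn g₁ s) (h₂ : ContinuousOn g₂ s)
    (heq : ∀ x ∈ s, Complex.exp (g₁ x * I) = Complex.exp (g₂ x * I))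
    {x0 : ℝ × ℝ} (hx0 : x0 ∈ s) (h0 : g₁ x0 = g₂ x0) : ∀ x ∈ s, g₁ x = g₂ x := by
  intro x hx
  have hπ := Real.pi_pos
  have key := myIntConst hs (h := fun y => (g₁ y - g₂ y) / (2 * π))
      ((h₁.sub h₂).div_const _)
      (fun y hy => by
        obtain ⟨k, hk⟩ := myExpDiff (heq y hy)
        exact ⟨k, by rw [hk]; field_simp; ring⟩) hx hx0
  have h1 : (g₁ x - g₂ x) / (2 * π) = 0 := by
    rw [key, h0]; simp
  rcases div_eq_zero_iff.mp h1 with h2 | h2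
  · linarith
  · linarith

private lemma myLiftBall (f : ℝ × ℝ → ℂ) (hf : Continuous f) (hnorm : ∀ x, ‖f x‖ = 1)
    (n : ℕ) : ∃ g : ℝ × ℝ → ℝ, ContinuousOn g (closedBall 0 n) ∧
      (∀ x ∈ closedBall (0 : ℝ × ℝ) n, f x = Complex.exp (g x * I)) ∧ g 0 = arg (f 0) := by
  have hne : ∀ x, f x ≠ 0 := fun x h => by have := hnorm x; rw [h] at this; simp at this
  have hK : IsCompact (closedBall (0 : ℝ × ℝ) n) := isCompact_closedBall _ _
  have hUC : UniformContinuousOn f (closedBall 0 n) :=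
    hK.uniformContinuousOn_of_continuous hf.continuousOn
  rw [Metric.uniformContinuousOn_iff] at hUC
  obtain ⟨δ, hδpos, hδ⟩ := hUC 1 one_pos
  set N : ℕ := ⌈(n : ℝ) / δ⌉₊ + 1 with hN
  have hNpos : 0 < (N : ℝ) := by positivity
  have hNδ : (n : ℝ) / N < δ := by
    have h1 : (n : ℝ) / δ < N := lt_of_le_of_lt (Nat.le_ceil _) (by exact_mod_cast Nat.lt_succ_self _)
    rw [div_lt_iff₀ hNpos]
    rw [div_lt_iff₀ hδpos] at h1
    linarith
  set q : ℕ → (ℝ × ℝ) → ℂ := fun k x => f ((((k : ℝ) + 1) / N) • x) * (f (((k : ℝ) / N) • x))⁻¹ with hq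
  have hmem : ∀ x ∈ closedBall (0 : ℝ × ℝ) n, ∀ c : ℝ, 0 ≤ c → c ≤ 1 →
      c • x ∈ closedBall (0 : ℝ × ℝ) n := by
    intro x hx c hc0 hc1
    rw [mem_closedBall_zero_iff] at hx ⊢
    rw [norm_smul, Real.norm_eq_abs, _root_.abs_of_nonneg hc0]
    calc c * ‖x‖ ≤ 1 * ‖x‖ := by nlinarith [norm_nonneg x]
    _ = ‖x‖ := one_mul _
    _ ≤ n := hx
  have hqcont : ∀ k : ℕ, Continuous (q k) := by
    intro k
    exact ((hf.comp (continuous_const_smul _)).mul ((hf.comp (continuous_const_smul _)).inv₀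
      (fun x => hne _)))
  have hslit : ∀ x ∈ closedBall (0 : ℝ × ℝ) n, ∀ k : ℕ, k < N → q k x ∈ slitPlane := by
    intro x hx k hk
    have hk1 : ((k : ℝ) + 1) / N ≤ 1 := by
      rw [div_le_one hNpos]
      have : (k : ℝ) + 1 ≤ N := by exact_mod_cast Nat.succ_le_of_lt hk
      linarith
    have hk0 : (0:ℝ) ≤ (k : ℝ) / N := by positivity
    have hk1' : (k : ℝ) / N ≤ 1 := le_trans (by gcongr; linarith) hk1
    have ha : ((k : ℝ) / N) • x ∈ closedBall (0 : ℝ × ℝ) n := hmem x hx _ hk0 hk1'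
    have hb : (((k : ℝ) + 1) / N) • x ∈ closedBall (0 : ℝ × ℝ) n :=
      hmem x hx _ (by positivity) hk1
    have hdist : dist (((k : ℝ) / N) • x) ((((k : ℝ) + 1) / N) • x) < δ := by
      rw [dist_eq_norm, ← sub_smul, norm_smul, Real.norm_eq_abs]
      have h1 : |(k : ℝ) / N - ((k : ℝ) + 1) / N| = 1 / N := by
        rw [div_sub_div_same, abs_div]
        simp [abs_of_pos hNpos]
      rw [h1]
      calc 1 / (N : ℝ) * ‖x‖ ≤ 1 / N * n := by
            apply mul_le_mul_of_nonneg_left (mem_closedBall_zero_iff.mp hx) (by positivity)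
        _ = n / N := by ring
        _ < δ := hNδ
    have hfd : dist (f (((k : ℝ) / N) • x)) (f ((((k : ℝ) + 1) / N) • x)) < 1 :=
      hδ _ ha _ hb hdist
    -- show q k x ∈ slitPlane
    by_contra hcon
    rw [Complex.mem_slitPlane_iff] at hcon
    push_neg at hcon
    obtain ⟨hre, him⟩ := hcon
    have habs : ‖q k x‖ = 1 := by
      rw [hq]
      simp only [norm_mul, norm_inv, hnorm]
      norm_num
    have hreal : q k x = ((q k x).re : ℂ) := by
      apply Complex.ext <;> simp [him]
    have habs' : |(q k x).re| = 1 := by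
      rw [hreal, Complex.norm_real, Real.norm_eq_abs] at habs
      exact habs
    have hqm1 : q k x = -1 := by
      rw [hreal]
      have : (q k x).re = -1 := by
        rcases abs_cases (q k x).re with ⟨h1, _⟩ | ⟨h1, _⟩ <;> linarith [habs']
      rw [this]; norm_num
    have hfb : f ((((k : ℝ) + 1) / N) • x) = -f (((k : ℝ) / N) • x) := by
      have h3 := hqm1
      rw [hq] at h3
      simp only [] at h3
      have h4 := congrArg (· * f (((k : ℝ) / N) • x)) h3
      rw [mul_assoc, inv_mul_cancel₀ (hne _), mul_one, neg_one_mul] at h4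
      exact h4
    rw [dist_eq_norm, hfb] at hfd
    have : ‖f (((k : ℝ) / N) • x) - -f (((k : ℝ) / N) • x)‖ = 2 := by
      rw [sub_neg_eq_add]
      have : f (((k : ℝ) / N) • x) + f (((k : ℝ) / N) • x) = (2:ℂ) * f (((k : ℝ) / N) • x) := by ring
      rw [this, norm_mul]
      have h2 : ‖f (((k : ℝ) / N) • x)‖ = 1 := hnorm _
      rw [h2]
      norm_num
    linarith
  
  set g : ℝ × ℝ → ℝ := fun x => arg (f 0) + ∑ k ∈ Finset.range N, arg (q k x) with hg
  have hstep : ∀ x ∈ closedBall (0 : ℝ × ℝ) n, ∀ m : ℕ, m ≤ N →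
      Complex.exp ((arg (f 0) + ∑ k ∈ Finset.range m, arg (q k x)) * I)
        = f (((m : ℝ) / N) • x) := by
    intro x hx m
    induction m with
    | zero =>
      intro _
      simp only [Finset.range_zero, Finset.sum_empty, add_zero, Nat.cast_zero, zero_div, zero_smul]
      have h1 := Complex.norm_mul_exp_arg_mul_I (f 0)
      rw [hnorm 0] at h1
      simpa using h1
    | succ m ih =>
      intro hm
      have hmN : m < N := hm
      have ihe := ih (le_of_lt hmN)
      rw [Finset.sum_range_succ, Complex.ofReal_add]
      have hsplit : ((arg (f 0) : ℂ) + ((∑ k ∈ Finset.range m, arg (q k x) : ℝ) + (arg (q m x) : ℝ))) * I =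
          ((arg (f 0) : ℂ) + (∑ k ∈ Finset.range m, arg (q k x) : ℝ)) * I + (arg (q m x) : ℝ) * I := by ring
      rw [hsplit, Complex.exp_add]
      have habsq : ‖q m x‖ = 1 := by
        rw [hq]; simp only [norm_mul, norm_inv, hnorm]; norm_num
      have hexpq : Complex.exp ((arg (q m x) : ℂ) * I) = q m x := by
        have h1 := Complex.norm_mul_exp_arg_mul_I (q m x)
        rw [habsq] at h1
        simpa using h1
      rw [hexpq, ihe, hq]
      simp only []
      push_cast
      rw [mul_comm, mul_assoc, inv_mul_cancel₀ (hne _), mul_one]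
  refine ⟨g, ?_, ?_, ?_⟩
  · apply ContinuousOn.add continuousOn_const
    apply continuousOn_finset_sum
    intro k hk
    intro x hx
    apply ContinuousAt.continuousWithinAt
    exact (Complex.continuousAt_arg (hslit x hx k (Finset.mem_range.mp hk))).comp
      (hqcont k).continuousAt
  · intro x hx
    have := hstep x hx N le_rfl
    rw [div_self (ne_of_gt hNpos), one_smul] at this
    simpa [hg] using this.symm
  · rw [hg]
    simp only []
    have : ∀ k ∈ Finset.range N, arg (q k 0) = 0 := by
      intro k _
      rw [hq]
      simp only [smul_zero]
      rw [mul_inv_cancel₀ (hne 0), Complex.arg_one]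
    rw [Finset.sum_congr rfl this]
    simp

private lemma myLift (f : ℝ × ℝ → ℂ) (hf : Continuous f) (hnorm : ∀ x, ‖f x‖ = 1) :
    ∃ g : ℝ × ℝ → ℝ, Continuous g ∧ ∀ x, f x = Complex.exp (g x * I) := by
  choose G hGc hGl hG0 using myLiftBall f hf hnorm
  have hconn : ∀ n : ℕ, IsPreconnected (closedBall (0 : ℝ × ℝ) n) :=
    fun n => (convex_closedBall _ _).isPreconnected
  have hagree : ∀ m n : ℕ, m ≤ n → ∀ x ∈ closedBall (0 : ℝ × ℝ) m, G m x = G n x := by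
    intro m n hmn x hx
    have hsub : closedBall (0 : ℝ × ℝ) m ⊆ closedBall (0 : ℝ × ℝ) n :=
      closedBall_subset_closedBall (by exact_mod_cast hmn)
    exact myLiftAgree (hconn m) (hGc m) ((hGc n).mono hsub)
      (fun y hy => by rw [← hGl m y hy, ← hGl n y (hsub hy)])
      (mem_closedBall_self (by positivity)) (by rw [hG0, hG0]) x hx
  set g : ℝ × ℝ → ℝ := fun x => G ⌈‖x‖⌉₊ x with hg
  have hgen : ∀ (n : ℕ) (x : ℝ × ℝ), ‖x‖ ≤ n → g x = G n x := by
    intro n x hxn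
    have h1 : x ∈ closedBall (0 : ℝ × ℝ) (⌈‖x‖⌉₊ : ℕ) := by
      rw [mem_closedBall_zero_iff]
      exact Nat.le_ceil _
    exact hagree _ n (Nat.ceil_le.mpr hxn) x h1
  refine ⟨g, ?_, ?_⟩
  · rw [continuous_iff_continuousAt]
    intro x
    set n : ℕ := ⌈‖x‖⌉₊ + 1 with hn
    have hxn : ‖x‖ < n := lt_of_le_of_lt (Nat.le_ceil _) (by exact_mod_cast Nat.lt_succ_self _)
    have hball : Metric.ball (0 : ℝ × ℝ) n ∈ nhds x :=
      isOpen_ball.mem_nhds (by rwa [mem_ball_zero_iff])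
    have hcb : closedBall (0 : ℝ × ℝ) n ∈ nhds x :=
      Filter.mem_of_superset hball ball_subset_closedBall
    have hev : G n =ᶠ[nhds x] g :=
      Filter.eventually_of_mem hball
        (fun y hy => (hgen n y (le_of_lt (by rwa [← mem_ball_zero_iff]))).symm)
    exact ((hGc n).continuousAt hcb).congr hev
  · intro x
    have h1 := hGl ⌈‖x‖⌉₊ x (by rw [mem_closedBall_zero_iff]; exact Nat.le_ceil _)
    rw [← hgen ⌈‖x‖⌉₊ x (Nat.le_ceil _)] at h1
    exact h1

private lemma myUnicoherent {A B P Q : Set (ℝ × ℝ)} (hA : IsClosed A) (hB : IsClosed B)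
    (hAc : IsPreconnected A) (hBc : IsPreconnected B) (hUn : A ∪ B = univ)
    (hP : IsClosed P) (hQ : IsClosed Q) (hPne : P.Nonempty) (hQne : Q.Nonempty)
    (hPQ : Disjoint P Q) (hInt : A ∩ B = P ∪ Q) : False := by
  classical
  have hπ := Real.pi_pos
  set φ : ℝ × ℝ → ℝ := fun x => infDist x P / (infDist x P + infDist x Q) with hφ
  have hden : ∀ x, 0 < infDist x P + infDist x Q := by
    intro x
    have hp0 : 0 ≤ infDist x P := infDist_nonneg
    have hq0 : 0 ≤ infDist x Q := infDist_nonneg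
    rcases lt_or_eq_of_le (add_nonneg hp0 hq0) with h | h
    · exact h
    · exfalso
      have h1 : infDist x P = 0 := by linarith
      have h2 : infDist x Q = 0 := by linarith
      have hxP : x ∈ P := by
        by_contra hc
        exact absurd h1 (ne_of_gt ((hP.notMem_iff_infDist_pos hPne).mp hc))
      have hxQ : x ∈ Q := by
        by_contra hc
        exact absurd h2 (ne_of_gt ((hQ.notMem_iff_infDist_pos hQne).mp hc))
      exact hPQ.ne_of_mem hxP hxQ rfl
  have hφc : Continuous φ :=
    (continuous_infDist_pt P).div ((continuous_infDist_pt P).add (continuous_infDist_pt Q))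
      (fun x => ne_of_gt (hden x))
  have hφ0 : ∀ x ∈ P, φ x = 0 := by
    intro x hx
    simp [hφ, infDist_zero_of_mem hx]
  have hφ1 : ∀ x ∈ Q, φ x = 1 := by
    intro x hx
    have h2 : infDist x Q = 0 := infDist_zero_of_mem hx
    have h1 : infDist x P ≠ 0 := by
      have hxP : x ∉ P := fun hc => hPQ.ne_of_mem hc hx rfl
      exact ne_of_gt ((hP.notMem_iff_infDist_pos hPne).mp hxP)
    rw [hφ]
    simp only [h2, add_zero]
    exact div_self h1
  set f : ℝ × ℝ → ℂ := fun x =>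
    if x ∈ A then Complex.exp ((π * φ x : ℝ) * I) else Complex.exp (-((π * φ x : ℝ) : ℂ) * I)
    with hfdef
  have hfrontsub : frontier A ⊆ P ∪ Q := by
    intro x hx
    rw [← hInt]
    have hxA : x ∈ A := hA.frontier_subset hx
    have hxB : x ∈ B := by
      by_contra hc
      have hBc' : Bᶜ ⊆ interior A := by
        apply interior_maximal ?_ hB.isOpen_compl
        intro y hy
        rcases (eq_univ_iff_forall.mp hUn y) with h | h
        · exact h
        · exact absurd h hy
      have hint : x ∈ interior A := hBc' hc
      simp only [frontier, mem_diff] at hx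
      exact hx.2 hint
    exact ⟨hxA, hxB⟩
  have hagree : ∀ x ∈ P ∪ Q,
      Complex.exp ((π * φ x : ℝ) * I) = Complex.exp (-((π * φ x : ℝ) : ℂ) * I) := by
    intro x hx
    rcases hx with hx | hx
    · rw [hφ0 x hx]
      simp
    · rw [hφ1 x hx, mul_one, neg_mul, Complex.exp_neg, Complex.exp_pi_mul_I]
      norm_num
  have hfc : Continuous f := by
    rw [hfdef]
    apply Continuous.if
    · intro a ha
      have ha' : a ∈ frontier A := by simpa using ha
      exact hagree a (hfrontsub ha')
    · exact Continuous.cexp ((Complex.continuous_ofReal.comp (continuous_const.mul hφc)).mul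
        continuous_const)
    · exact Continuous.cexp (((Complex.continuous_ofReal.comp
        (continuous_const.mul hφc)).neg).mul continuous_const)
  have hnorm : ∀ x, ‖f x‖ = 1 := by
    intro x
    rw [hfdef]
    simp only []
    split
    · exact Complex.norm_exp_ofReal_mul_I _
    · rw [show (-((π * φ x : ℝ) : ℂ) * I) = ((-(π * φ x) : ℝ) : ℂ) * I by push_cast; ring]
      exact Complex.norm_exp_ofReal_mul_I _
  obtain ⟨g, hgc, hgl⟩ := myLift f hfc hnorm
  have hfA : ∀ x ∈ A, f x = Complex.exp ((π * φ x : ℝ) * I) := by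
    intro x hx
    rw [hfdef]
    simp only [if_pos hx]
  have hfB : ∀ x ∈ B, f x = Complex.exp (-((π * φ x : ℝ) : ℂ) * I) := by
    intro x hx
    rw [hfdef]
    simp only []
    split
    · rename_i hxA
      exact hagree x (by rw [← hInt]; exact ⟨hxA, hx⟩)
    · rfl
  have hintA : ∀ x ∈ A, ∃ k : ℤ, (g x - π * φ x) / (2 * π) = k := by
    intro x hx
    have h1 : Complex.exp (g x * I) = Complex.exp ((π * φ x : ℝ) * I) := by
      rw [← hgl x, hfA x hx]
    obtain ⟨k, hk⟩ := myExpDiff h1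
    exact ⟨k, by rw [hk]; field_simp; ring⟩
  have hintB : ∀ x ∈ B, ∃ k : ℤ, (g x + π * φ x) / (2 * π) = k := by
    intro x hx
    have h1 : Complex.exp (g x * I) = Complex.exp ((-(π * φ x) : ℝ) * I) := by
      rw [← hgl x, hfB x hx]
      push_cast
      ring_nf
    obtain ⟨k, hk⟩ := myExpDiff h1
    exact ⟨k, by rw [hk]; field_simp; ring⟩
  obtain ⟨p, hp⟩ := hPne
  obtain ⟨q, hq⟩ := hQne
  have hpAB : p ∈ A ∩ B := by rw [hInt]; exact Or.inl hp
  have hqAB : q ∈ A ∩ B := by rw [hInt]; exact Or.inr hq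
  have hcA : ContinuousOn (fun x => (g x - π * φ x) / (2 * π)) A :=
    ((hgc.continuousOn.sub (continuous_const.mul hφc).continuousOn).div_const _)
  have hcB : ContinuousOn (fun x => (g x + π * φ x) / (2 * π)) B :=
    ((hgc.continuousOn.add (continuous_const.mul hφc).continuousOn).div_const _)
  have keyA := myIntConst hAc hcA hintA hpAB.1 hqAB.1
  have keyB := myIntConst hBc hcB hintB hpAB.2 hqAB.2
  rw [hφ0 p hp, hφ1 q hq] at keyA keyB
  have h2π : (2 : ℝ) * π ≠ 0 := by positivity
  have eA : g p = g q - π := by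
    field_simp at keyA
    linarith
  have eB : g p = g q + π := by
    field_simp at keyB
    linarith
  linarith

private lemma mySide {C U V : Set (ℝ × ℝ)} (hC : IsPreconnected C) (hU : IsOpen U) (hV : IsOpen V)
    (hd : Disjoint U V) (hsub : C ⊆ U ∪ V) : C ⊆ U ∨ C ⊆ V := by
  rcases C.eq_empty_or_nonempty with h | ⟨x, hx⟩
  · left; rw [h]; exact empty_subset _
  · rcases hsub hx with hxu | hxv
    · left
      exact hC.subset_left_of_subset_union hU hV hd hsub ⟨x, hx, hxu⟩
    · right
      exact hC.subset_right_of_subset_union hU hV hd hsub ⟨x, hx, hxv⟩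

end

/-- A planar line: a closed subset of the plane whose complement has exactly two
connected components `L` and `R`, each open with frontier equal to the line. -/
structure PlanarLine (lam L R : Set (ℝ × ℝ)) : Prop where
  closed : IsClosed lam
  openL : IsOpen L
  openR : IsOpen R
  nonemptyL : L.Nonempty
  nonemptyR : R.Nonempty
  connL : IsConnected L
  connR : IsConnected R
  frontL : frontier L = lam
  frontR : frontier R = lam
  union : L ∪ R = lamᶜ
  disj : Disjoint L R

/-- The sides of two disjoint planar lines are nested: σ' lies in exactly one side of σ,
and the closure of the opposite side of σ lies in exactly one side of σ'. -/

-- closure of the open side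
private lemma myClos {lam L R : Set (ℝ × ℝ)} (h : PlanarLine lam L R) :
    closure L = L ∪ lam ∧ Disjoint L lam := by
  constructor
  · rw [← h.frontL, h.openL.frontier_eq]
    exact (union_diff_cancel subset_closure).symm
  · rw [← h.frontL, h.openL.frontier_eq]
    exact disjoint_sdiff_self_right

private lemma myFlip {lam L R : Set (ℝ × ℝ)} (h : PlanarLine lam L R) : PlanarLine lam R L :=
  ⟨h.closed, h.openR, h.openL, h.nonemptyR, h.nonemptyL, h.connR, h.connL, h.frontR, h.frontL,
    by rw [← h.union]; exact union_comm _ _, h.disj.symm⟩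

private lemma myNe {lam L R : Set (ℝ × ℝ)} (h : PlanarLine lam L R) : lam.Nonempty := by
  rcases lam.eq_empty_or_nonempty with he | hne
  · exfalso
    have h1 : frontier L = ∅ := by rw [h.frontL, he]
    have h2 : IsClopen L := isClopen_iff_frontier_eq_empty.mpr h1
    rcases isClopen_iff.mp h2 with h3 | h3
    · exact h.nonemptyL.ne_empty h3
    · obtain ⟨x, hx⟩ := h.nonemptyR
      exact h.disj.ne_of_mem (h3 ▸ mem_univ x) hx rfl
  · exact hne

theorem stmt_12 (s L R s' L' R' : Set (ℝ × ℝ))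
    (hline : PlanarLine s L R) (hline' : PlanarLine s' L' R')
    (hclosL : IsConnected (closure L)) (hclosR : IsConnected (closure R))
    (hdisj : Disjoint s s') :
    Xor' (s' ⊆ L) (s' ⊆ R) ∧
    (s' ⊆ L → Xor' (closure R ⊆ L') (closure R ⊆ R')) ∧
    (s' ⊆ R → Xor' (closure L ⊆ L') (closure L ⊆ R')) := by
  obtain ⟨hclL, hdLs⟩ := myClos hline
  obtain ⟨hclR, hdRs⟩ := myClos (myFlip hline)
  obtain ⟨hclL', hdL's'⟩ := myClos hline'
  obtain ⟨hclR', hdR's'⟩ := myClos (myFlip hline')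
  have hs'ne : s'.Nonempty := myNe hline'
  have hs'sub : s' ⊆ L ∪ R := by
    rw [hline.union]
    exact hdisj.subset_compl_left
  have hssub : s ⊆ L' ∪ R' := by
    rw [hline'.union]
    exact hdisj.symm.subset_compl_left
  -- main inclusive claim
  have main1 : s' ⊆ L ∨ s' ⊆ R := by
    by_cases hLs : (L' ∩ s).Nonempty
    · by_cases hRs : (R' ∩ s).Nonempty
      · exfalso
        have hPc : s ∩ L' = s ∩ closure L' := by
          rw [hclL']
          ext x
          constructor
          · rintro ⟨h1, h2⟩; exact ⟨h1, Or.inl h2⟩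
          · rintro ⟨h1, h2 | h2⟩
            · exact ⟨h1, h2⟩
            · exact absurd rfl (hdisj.ne_of_mem h1 h2)
        have hQc : s ∩ R' = s ∩ closure R' := by
          rw [hclR']
          ext x
          constructor
          · rintro ⟨h1, h2⟩; exact ⟨h1, Or.inl h2⟩
          · rintro ⟨h1, h2 | h2⟩
            · exact ⟨h1, h2⟩
            · exact absurd rfl (hdisj.ne_of_mem h1 h2)
        apply myUnicoherent (A := closure L) (B := closure R) (P := s ∩ L') (Q := s ∩ R')
          isClosed_closure isClosed_closure hclosL.isPreconnected hclosR.isPreconnected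
        · -- union = univ
          rw [hclL, hclR]
          apply eq_univ_of_forall
          intro x
          by_cases hx : x ∈ s
          · exact Or.inl (Or.inr hx)
          · rcases (hline.union ▸ (show x ∈ sᶜ from hx)) with h | h
            · exact Or.inl (Or.inl h)
            · exact Or.inr (Or.inl h)
        · rw [hPc]; exact hline.closed.inter isClosed_closure
        · rw [hQc]; exact hline.closed.inter isClosed_closure
        · obtain ⟨x, hx1, hx2⟩ := hLs; exact ⟨x, hx2, hx1⟩
        · obtain ⟨x, hx1, hx2⟩ := hRs; exact ⟨x, hx2, hx1⟩
        · exact Disjoint.mono inter_subset_right inter_subset_right hline'.disj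
        · -- closure L ∩ closure R = (s ∩ L') ∪ (s ∩ R')
          rw [hclL, hclR]
          rw [← inter_union_distrib_left]
          have h1 : (L ∪ s) ∩ (R ∪ s) = s := by
            ext x
            constructor
            · rintro ⟨h1 | h1, h2 | h2⟩
              · exact absurd rfl (hline.disj.ne_of_mem h1 h2)
              · exact h2
              · exact h1
              · exact h1
            · intro h1; exact ⟨Or.inr h1, Or.inr h1⟩
          rw [h1]
          exact (inter_eq_left.mpr hssub).symm
      · -- R' misses s
        have hR'sub : R' ⊆ L ∪ R := by
          rw [hline.union]
          intro x hx
          by_contra h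
          exact hRs ⟨x, hx, not_not.mp h⟩
        have hfr : s' ⊆ closure R' := by
          rw [← hline'.frontR]
          exact frontier_subset_closure
        rcases mySide hline'.connR.isPreconnected hline.openL hline.openR hline.disj hR'sub
          with h | h
        · left
          intro x hx
          have h2 : x ∈ closure L := closure_mono h (hfr hx)
          rw [hclL] at h2
          rcases h2 with h2 | h2
          · exact h2
          · exact absurd rfl (hdisj.ne_of_mem h2 hx)
        · right
          intro x hx
          have h2 : x ∈ closure R := closure_mono h (hfr hx)
          rw [hclR] at h2
          rcases h2 with h2 | h2
          · exact h2
          · exact absurd rfl (hdisj.ne_of_mem h2 hx)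
    · -- L' misses s
      have hL'sub : L' ⊆ L ∪ R := by
        rw [hline.union]
        intro x hx
        by_contra h
        exact hLs ⟨x, hx, not_not.mp h⟩
      have hfr : s' ⊆ closure L' := by
        rw [← hline'.frontL]
        exact frontier_subset_closure
      rcases mySide hline'.connL.isPreconnected hline.openL hline.openR hline.disj hL'sub
        with h | h
      · left
        intro x hx
        have h2 : x ∈ closure L := closure_mono h (hfr hx)
        rw [hclL] at h2
        rcases h2 with h2 | h2
        · exact h2
        · exact absurd rfl (hdisj.ne_of_mem h2 hx)
      · right
        intro x hx
        have h2 : x ∈ closure R := closure_mono h (hfr hx)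
        rw [hclR] at h2
        rcases h2 with h2 | h2
        · exact h2
        · exact absurd rfl (hdisj.ne_of_mem h2 hx)
  have hnotboth : ¬ (s' ⊆ L ∧ s' ⊆ R) := by
    rintro ⟨h1, h2⟩
    obtain ⟨x, hx⟩ := hs'ne
    exact absurd rfl (hline.disj.ne_of_mem (h1 hx) (h2 hx))
  refine ⟨?_, ?_, ?_⟩
  · rcases main1 with h | h
    · exact Or.inl ⟨h, fun h2 => hnotboth ⟨h, h2⟩⟩
    · exact Or.inr ⟨h, fun h2 => hnotboth ⟨h2, h⟩⟩
  · intro hL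
    have hsub2 : closure R ⊆ L' ∪ R' := by
      rw [hline'.union, hclR]
      rintro x (hx | hx)
      · intro hc
        exact absurd rfl (hline.disj.ne_of_mem (hL hc) hx)
      · exact hdisj.symm.subset_compl_left hx
    rcases mySide hclosR.isPreconnected hline'.openL hline'.openR hline'.disj hsub2 with h | h
    · exact Or.inl ⟨h, fun h2 => by
        obtain ⟨x, hx⟩ := hline.nonemptyR
        exact absurd rfl (hline'.disj.ne_of_mem (h (subset_closure hx)) (h2 (subset_closure hx)))⟩
    · exact Or.inr ⟨h, fun h2 => by
        obtain ⟨x, hx⟩ := hline.nonemptyR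
        exact absurd rfl (hline'.disj.ne_of_mem (h2 (subset_closure hx)) (h (subset_closure hx)))⟩
  · intro hR
    have hsub2 : closure L ⊆ L' ∪ R' := by
      rw [hline'.union, hclL]
      rintro x (hx | hx)
      · intro hc
        exact absurd rfl (hline.disj.ne_of_mem hx (hR hc))
      · exact hdisj.symm.subset_compl_left hx
    rcases mySide hclosL.isPreconnected hline'.openL hline'.openR hline'.disj hsub2 with h | h
    · exact Or.inl ⟨h, fun h2 => by
        obtain ⟨x, hx⟩ := hline.nonemptyL
        exact absurd rfl (hline'.disj.ne_of_mem (h (subset_closure hx)) (h2 (subset_closure hx)))⟩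
    · exact Or.inr ⟨h, fun h2 => by
        obtain ⟨x, hx⟩ := hline.nonemptyL
        exact absurd rfl (hline'.disj.ne_of_mem (h2 (subset_closure hx)) (h (subset_closure hx)))⟩
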